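/- For all real x, y, the family ( (m,n) ↦ d(m,n)·x^m·y^n ) indexed by ℕ×ℕ is summable, and Σ_{m,n ∈ ℕ} d(m,n)·x^m·y^n = d(0,0) · exp( K·x·(1 + y/(1+q)) ). (The generating-function part of the Appendix Lemma (lem:recursion) of the paper.) -/

import Mathlib

/-- The generating-function part of the Appendix Lemma (lem:recursion) of the paper: if
`d : ℕ → ℕ → ℝ` (extended by zero to negative indices) satisfies
`d(m,n) = K (d(m−1,n) + d(m−1,n−1)) / (m + n q)` for all `(m,n) ≠ (0,0)`, with `q > −1` and
all denominators nonzero, then for all real `x, y` the family `d(m,n) x^m y^n` is summable and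
`Σ_{m,n} d(m,n) x^m y^n = d(0,0) · exp(K x (1 + y/(1+q)))`. -/
theorem recursion_generating_function (q K : ℝ) (hq : -1 < q) (d : ℕ → ℕ → ℝ)
    (hden : ∀ m n : ℕ, (m, n) ≠ (0, 0) → (m : ℝ) + n * q ≠ 0)
    (hrec : ∀ m n : ℕ, (m, n) ≠ (0, 0) →
      d m n = K * ((if m = 0 then 0 else d (m - 1) n) +
        (if m = 0 ∨ n = 0 then 0 else d (m - 1) (n - 1))) / ((m : ℝ) + n * q)) :
    ∀ x y : ℝ,
      Summable (fun p : ℕ × ℕ => d p.1 p.2 * x ^ p.1 * y ^ p.2) ∧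
      ∑' p : ℕ × ℕ, d p.1 p.2 * x ^ p.1 * y ^ p.2 =
        d 0 0 * Real.exp (K * x * (1 + y / (1 + q))) := by
  have h1q : (0:ℝ) < 1 + q := by linarith
  have h1q' : (1 + q : ℝ) ≠ 0 := ne_of_gt h1q
  have key : ∀ m n : ℕ, d m n =
      d 0 0 * K ^ m / (m.factorial : ℝ) * (m.choose n : ℝ) * ((1+q)⁻¹) ^ n := by
    intro m
    induction m with
    | zero =>
      intro n
      cases n with
      | zero => simp
      | succ k =>
        rw [hrec 0 (k+1) (by simp)]
        simp
    | succ m ih =>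
      intro n
      rw [hrec (m+1) n (by simp)]
      have hD := hden (m+1) n (by simp)
      push_cast at hD
      have hfac : ((m.factorial : ℝ)) ≠ 0 := by exact_mod_cast m.factorial_ne_zero
      cases n with
      | zero =>
        simp only [Nat.add_sub_cancel, if_neg (Nat.succ_ne_zero m), or_true, if_pos]
        rw [ih 0]
        simp only [Nat.choose_zero_right, pow_zero, Nat.cast_zero, Nat.factorial_succ]
        push_cast at hD ⊢
        field_simp
        ring
      | succ k =>
        simp only [if_neg (Nat.succ_ne_zero m), Nat.add_sub_cancel,
          if_neg (by simp : ¬(m+1 = 0 ∨ k+1 = 0))]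
        rw [ih (k+1), ih k]
        have hc1 : ((m+1).choose (k+1) : ℝ) = (m.choose (k+1) : ℝ) + (m.choose k : ℝ) := by
          rw [Nat.choose_succ_succ]; push_cast; ring
        have hc2 : ((m:ℝ)+1) * (m.choose k : ℝ) = ((m+1).choose (k+1) : ℝ) * ((k:ℝ)+1) := by
          exact_mod_cast congrArg (Nat.cast : ℕ → ℝ) (Nat.add_one_mul_choose_eq m k)
        rw [Nat.factorial_succ]
        push_cast at hD hc1 hc2 ⊢
        rw [inv_pow, inv_pow]
        field_simp
        have hD' : (m:ℝ) + 1 + q * ((k:ℝ) + 1) ≠ 0 := by rw [mul_comm]; exact hD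
        rw [div_eq_iff hD']
        linear_combination (-(d 0 0 * K * K ^ m * (1 + q) ^ k * ((m:ℝ) + 1))) * hc1 + (d 0 0 * K * K ^ m * (1 + q) ^ k * q) * hc2
  intro x y
  set c : ℝ := y / (1 + q) with hc
  have hfam : ∀ p : ℕ × ℕ, d p.1 p.2 * x ^ p.1 * y ^ p.2 =
      d 0 0 * ((K*x) ^ p.1 / (p.1.factorial : ℝ) * ((p.1.choose p.2 : ℝ) * c ^ p.2)) := by
    rintro ⟨m, n⟩
    simp only [key m n, hc, div_eq_mul_inv, mul_pow]
    ring
  have hrowsum : ∀ (a b : ℝ) (m : ℕ),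
      Summable (fun n : ℕ => b * ((m.choose n : ℝ) * a ^ n)) ∧
      ∑' n : ℕ, b * ((m.choose n : ℝ) * a ^ n) = b * (a + 1) ^ m := by
    intro a b m
    have hz : ∀ n ∉ Finset.range (m+1), b * ((m.choose n : ℝ) * a ^ n) = 0 := by
      intro n hn
      have h : m < n := by simp [Finset.mem_range] at hn; omega
      simp [Nat.choose_eq_zero_of_lt h]
    refine ⟨summable_of_ne_finset_zero hz, ?_⟩
    rw [tsum_eq_sum hz, ← Finset.mul_sum, add_pow]
    congr 1
    exact Finset.sum_congr rfl fun n hn => by ring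
  have hgsum : Summable (fun p : ℕ × ℕ =>
      |K*x| ^ p.1 / (p.1.factorial : ℝ) * ((p.1.choose p.2 : ℝ) * |c| ^ p.2)) := by
    rw [summable_prod_of_nonneg]
    · constructor
      · intro m
        exact (hrowsum |c| (|K*x| ^ m / (m.factorial : ℝ)) m).1
      · apply Summable.congr (Real.summable_pow_div_factorial (|K*x| * (|c| + 1))) ?_
        intro m
        rw [(hrowsum |c| (|K*x| ^ m / (m.factorial : ℝ)) m).2, mul_pow]
        ring
    · rintro ⟨m, n⟩
      have h1 : (0:ℝ) ≤ |K*x| ^ m / (m.factorial : ℝ) :=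
        div_nonneg (pow_nonneg (abs_nonneg _) _) (Nat.cast_nonneg _)
      positivity
  have habs : Summable (fun p : ℕ × ℕ => |d p.1 p.2 * x ^ p.1 * y ^ p.2|) := by
    apply Summable.congr (hgsum.mul_left |d 0 0|)
    rintro ⟨m, n⟩
    rw [hfam (m, n)]
    simp only [abs_mul, abs_div, abs_pow, Nat.abs_cast]
    try ring
  have hsum : Summable (fun p : ℕ × ℕ => d p.1 p.2 * x ^ p.1 * y ^ p.2) :=
    Summable.of_abs habs
  refine ⟨hsum, ?_⟩
  have hsum' : Summable (fun p : ℕ × ℕ =>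
      d 0 0 * ((K*x) ^ p.1 / (p.1.factorial : ℝ) * ((p.1.choose p.2 : ℝ) * c ^ p.2))) :=
    hsum.congr hfam
  rw [tsum_congr hfam]
  rw [Summable.tsum_prod' hsum' (fun m => ((hrowsum c (d 0 0 * ((K*x) ^ m / (m.factorial : ℝ))) m).1.congr
    (fun n => by ring)))]
  have hinner : ∀ m : ℕ,
      (∑' n : ℕ, d 0 0 * ((K*x) ^ m / (m.factorial : ℝ) * ((m.choose n : ℝ) * c ^ n)))
      = d 0 0 * (((K*x) * (c+1)) ^ m / (m.factorial : ℝ)) := by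
    intro m
    have h2 := (hrowsum c (d 0 0 * ((K*x) ^ m / (m.factorial : ℝ))) m).2
    rw [tsum_congr (fun n => by ring :
      ∀ n : ℕ, d 0 0 * ((K*x) ^ m / (m.factorial : ℝ) * ((m.choose n : ℝ) * c ^ n))
        = d 0 0 * ((K*x) ^ m / (m.factorial : ℝ)) * ((m.choose n : ℝ) * c ^ n)), h2]
    conv_rhs => rw [mul_pow]
    ring
  refine Eq.trans (tsum_congr hinner) ?_
  rw [tsum_mul_left]
  congr 1
  rw [Real.exp_eq_exp_ℝ, NormedSpace.exp_eq_tsum_div]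
  have harg : K * x * (1 + y / (1 + q)) = (K*x) * (c+1) := by rw [hc]; ring
  rw [harg]
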